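/- Let G be a finite group, p a prime, and P a p-subgroup. The set P̃ = {x ∈ Ω_1 Z(P) : x ∈ E_1(G) or x = 1} is a subgroup of Z(P), and it is a characteristic subgroup of P (invariant under every automorphism of P induced by conjugation by an element of N_G(P)). -/

import Mathlib

/-- The center of a subgroup `P`, viewed as a subgroup of the ambient group `G`. -/
def ZS {G : Type*} [Group G] (P : Subgroup G) : Subgroup G :=
  Subgroup.centralizer (P : Set G) ⊓ P

/-- The smallest subset of `G` containing the elements of order `p` lying in the center of
some Sylow `p`-subgroup, closed under conjugation and under products of commuting elements. -/
inductive E1mem (p : ℕ) {G : Type*} [Group G] : G → Prop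
  | base (x : G) (h : orderOf x = p) (S : Sylow p G) (hx : x ∈ ZS (S : Subgroup G)) : E1mem p x
  | conj (g x : G) (h : E1mem p x) : E1mem p (g * x * g⁻¹)
  | mul (x y : G) (hx : E1mem p x) (hy : E1mem p y) (h : Commute x y) : E1mem p (x * y)

lemma E1mem_pow {p : ℕ} {G : Type*} [Group G] {x : G} (hx : E1mem p x) :
    ∀ n : ℕ, 1 ≤ n → E1mem p (x ^ n) := by
  intro n hn
  induction n with
  | zero => omega
  | succ m ih =>
    rcases Nat.eq_or_lt_of_le hn with h | h
    · simpa [← h] using hx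
    · have hm : 1 ≤ m := by omega
      rw [pow_succ]
      exact E1mem.mul _ _ (ih hm) hx ((Commute.refl x).pow_left m)

/-- The set `P̃ = {x ∈ Ω₁Z(P) : x ∈ E₁(G) or x = 1}` is a subgroup of `Z(P)`, and it is
invariant under conjugation by every element of `N_G(P)`. -/
theorem stmt5 {G : Type*} [Group G] [Fintype G] {p : ℕ} [Fact p.Prime]
    (P : Subgroup G) (hP : IsPGroup p ↥P) :
    ∃ T : Subgroup G,
      ((T : Set G) = {x : G | x ∈ ZS P ∧ x ^ p = 1 ∧ (E1mem p x ∨ x = 1)}) ∧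
      T ≤ ZS P ∧
      ∀ g ∈ Subgroup.normalizer (P : Set G), ∀ x ∈ T, g * x * g⁻¹ ∈ T := by
  have hp : p.Prime := Fact.out
  refine ⟨{ carrier := {x : G | x ∈ ZS P ∧ x ^ p = 1 ∧ (E1mem p x ∨ x = 1)}
            one_mem' := ⟨(ZS P).one_mem, one_pow p, Or.inr rfl⟩
            mul_mem' := ?_
            inv_mem' := ?_ }, rfl, ?_, ?_⟩
  · rintro x y ⟨hxZ, hxp, hxE⟩ ⟨hyZ, hyp, hyE⟩
    have hcomm : Commute x y := (hxZ.1 y hyZ.2).symm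
    refine ⟨(ZS P).mul_mem hxZ hyZ, by rw [hcomm.mul_pow, hxp, hyp, one_mul], ?_⟩
    rcases hxE with hx | rfl
    · rcases hyE with hy | rfl
      · exact Or.inl (E1mem.mul x y hx hy hcomm)
      · simpa using Or.inl hx
    · simpa using hyE
  · rintro x ⟨hxZ, hxp, hxE⟩
    refine ⟨(ZS P).inv_mem hxZ, by rw [inv_pow, hxp, inv_one], ?_⟩
    rcases hxE with hx | rfl
    · have hmul : x ^ (p - 1) * x = 1 := by
        rw [← pow_succ, Nat.sub_add_cancel hp.one_lt.le, hxp]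
      have h1 : x⁻¹ = x ^ (p - 1) := inv_eq_of_mul_eq_one_left hmul
      have h2 : 1 ≤ p - 1 := by have := hp.two_le; omega
      exact Or.inl (h1 ▸ E1mem_pow hx (p - 1) h2)
    · simp
  · exact fun x hx => hx.1
  · rintro g hg x ⟨hxZ, hxp, hxE⟩
    have hginv : g⁻¹ ∈ Subgroup.normalizer (P : Set G) := (Subgroup.normalizer (P : Set G)).inv_mem hg
    have hc : g * x * g⁻¹ ∈ Subgroup.centralizer (P : Set G) := by
      rw [Subgroup.mem_centralizer_iff]
      intro h hh
      have hh' : g⁻¹ * h * g ∈ P := by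
        have := (Subgroup.mem_normalizer_iff.mp hginv h).mp hh
        simpa using this
      have heq := hxZ.1 (g⁻¹ * h * g) hh'
      have := congrArg (fun z => g * z * g⁻¹) heq
      simpa [mul_assoc] using this
    have hPmem : g * x * g⁻¹ ∈ P := (Subgroup.mem_normalizer_iff.mp hg x).mp hxZ.2
    refine ⟨Subgroup.mem_inf.mpr ⟨hc, hPmem⟩, ?_, ?_⟩
    · rw [conj_pow, hxp, mul_one, mul_inv_cancel]
    · rcases hxE with hx | rfl
      · exact Or.inl (E1mem.conj g x hx)
      · simp
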